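/- The homogenized matrix A⁰ defined by A⁰λ = mean over Y of A∇ω_λ, where ω_λ solves the periodic cell problem −div(A∇ω_λ) = 0 in Y with ω_λ − λ·y being Y-periodic with zero mean, satisfies the ellipticity bounds (A⁰λ, λ) ≥ α|λ|² and |A⁰λ| ≤ (β²/α)|λ| for all λ ∈ ℝ^N, whenever A satisfies (Aξ, ξ) ≥ α|ξ|² and |Aξ| ≤ β|ξ|. -/

import Mathlib

open MeasureTheory
open scoped RealInnerProductSpace

/-- The unit cell `Y = (0,1)^N` (up to a null set). -/
def unitCell (N : ℕ) : Set (EuclideanSpace ℝ (Fin N)) :=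
  {y | ∀ i, y i ∈ Set.Ico (0 : ℝ) 1}

/-- `Y`-periodicity: invariance under integer translations. -/
def IsYPeriodic {N : ℕ} (f : EuclideanSpace ℝ (Fin N) → ℝ) : Prop :=
  ∀ (x : EuclideanSpace ℝ (Fin N)) (z : Fin N → ℤ),
    f (x + (EuclideanSpace.equiv (Fin N) ℝ).symm (fun i => (z i : ℝ))) = f x

lemma cell_eq_preimage (N : ℕ) : unitCell N =
    ((MeasurableEquiv.toLp 2 (Fin N → ℝ)).symm) ⁻¹' (Set.univ.pi fun _ => Set.Ico (0:ℝ) 1) := by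
  ext y; simp [unitCell, Set.mem_pi, MeasurableEquiv.toLp_symm_apply]

lemma cell_vol (N : ℕ) : volume (unitCell N) = 1 := by
  rw [cell_eq_preimage,
    (EuclideanSpace.volume_preserving_symm_measurableEquiv_toLp (Fin N)).measure_preimage
      (MeasurableSet.univ_pi fun _ => measurableSet_Ico).nullMeasurableSet]
  simp [volume_pi_pi, Real.volume_Ico]

lemma inner_gradient {N : ℕ} (f : EuclideanSpace ℝ (Fin N) → ℝ) (y v : EuclideanSpace ℝ (Fin N)) :
    ⟪gradient f y, v⟫ = fderiv ℝ f y v := by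
  rw [gradient, InnerProductSpace.toDual_symm_apply]

lemma norm_gradient {N : ℕ} (f : EuclideanSpace ℝ (Fin N) → ℝ) (y : EuclideanSpace ℝ (Fin N)) :
    ‖gradient f y‖ = ‖fderiv ℝ f y‖ := by
  rw [gradient]; exact LinearIsometryEquiv.norm_map _ _

lemma meas_gradient {N : ℕ} (f : EuclideanSpace ℝ (Fin N) → ℝ) :
    Measurable (gradient f) := by
  have : gradient f = fun y => (InnerProductSpace.toDual ℝ _).symm (fderiv ℝ f y) := rfl
  rw [this]
  exact ((InnerProductSpace.toDual ℝ _).symm.continuous.measurable).comp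
    (measurable_fderiv ℝ f)

lemma integral_cell {N : ℕ} {E : Type*} [NormedAddCommGroup E] [NormedSpace ℝ E]
    (f : EuclideanSpace ℝ (Fin N) → E) :
    ∫ y in unitCell N, f y =
      ∫ x in Set.univ.pi (fun _ : Fin N => Set.Ico (0:ℝ) 1),
        f (((MeasurableEquiv.toLp 2 (Fin N → ℝ)).symm).symm x) := by
  have h := (EuclideanSpace.volume_preserving_symm_measurableEquiv_toLp (Fin N)).setIntegral_preimage_emb
    ((MeasurableEquiv.toLp 2 (Fin N → ℝ)).symm).measurableEmbedding
    (fun x => f (((MeasurableEquiv.toLp 2 (Fin N → ℝ)).symm).symm x))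
    (Set.univ.pi fun _ => Set.Ico 0 1)
  rw [← h, cell_eq_preimage]
  simp

lemma coe_symm_eq (N : ℕ) : ⇑((MeasurableEquiv.toLp 2 (Fin N → ℝ)).symm).symm
    = ⇑(EuclideanSpace.equiv (Fin N) ℝ).symm := rfl

lemma insertNth_one_eq {n : ℕ} (i : Fin (n+1)) (x : Fin n → ℝ) :
    i.insertNth (1:ℝ) x = (i.insertNth (0:ℝ) x : Fin (n+1) → ℝ) + Pi.single i (1:ℝ) := by
  funext j
  refine Fin.succAboveCases i ?_ ?_ j
  · simp
  · intro k
    simp [Fin.insertNth_apply_succAbove, Pi.single_eq_of_ne (Fin.succAbove_ne i k)]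

lemma key_div {n : ℕ} (h : (Fin (n+1) → ℝ) → ℝ) (hd : Differentiable ℝ h) (i : Fin (n+1))
    (hperi : ∀ x, h (x + Pi.single i 1) = h x)
    (hint : IntegrableOn (fun x => fderiv ℝ h x (Pi.single i 1)) (Set.Icc 0 1) volume) :
    ∫ x in Set.Icc (0 : Fin (n+1) → ℝ) 1, fderiv ℝ h x (Pi.single i 1) = 0 := by
  have hle : (0 : Fin (n+1) → ℝ) ≤ 1 := fun _ => zero_le_one
  have hsum : ∀ x, (∑ j, (if j = i then fderiv ℝ h x else 0) (Pi.single j (1:ℝ))) =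
      fderiv ℝ h x (Pi.single i 1) := by
    intro x
    rw [Finset.sum_eq_single i]
    · simp
    · intro j _ hj; simp [hj]
    · simp
  have H := MeasureTheory.integral_divergence_of_hasFDerivAt_off_countable'
    (0 : Fin (n+1) → ℝ) 1 hle
    (fun j => if j = i then h else fun _ => 0)
    (fun j x => if j = i then fderiv ℝ h x else 0) ∅ Set.countable_empty
    (fun j => by
      rcases eq_or_ne j i with rfl | hj
      · simpa using hd.continuous.continuousOn
      · simp only [if_neg hj]; exact continuousOn_const)
    (fun x _ j => by
      rcases eq_or_ne j i with rfl | hj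
      · simpa using (hd x).hasFDerivAt
      · simp only [if_neg hj]; exact hasFDerivAt_const 0 x)
    (hint.congr_fun (fun x _ => (hsum x).symm) measurableSet_Icc)
  rw [show (∫ x in Set.Icc (0:Fin (n+1) → ℝ) 1,
        ∑ j, (if j = i then fderiv ℝ h x else 0) (Pi.single j (1:ℝ))) =
      ∫ x in Set.Icc (0:Fin (n+1) → ℝ) 1, fderiv ℝ h x (Pi.single i 1) from
    setIntegral_congr_fun measurableSet_Icc fun x _ => hsum x] at H
  rw [H]
  refine Finset.sum_eq_zero fun j _ => ?_
  rcases eq_or_ne j i with rfl | hj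
  · simp only [if_pos rfl, eq_self_iff_true, if_true, Pi.one_apply, Pi.zero_apply,
      insertNth_one_eq, hperi, sub_self]
  · simp [hj]

lemma periodic_integral_zero {N : ℕ} (hN : 0 < N) (g : EuclideanSpace ℝ (Fin N) → ℝ)
    (hg : Differentiable ℝ g) (hper : IsYPeriodic g) (i : Fin N)
    (hint : IntegrableOn (fun y => fderiv ℝ g y (EuclideanSpace.single i 1))
      (unitCell N) volume) :
    ∫ y in unitCell N, fderiv ℝ g y (EuclideanSpace.single i 1) = 0 := by
  obtain ⟨n, rfl⟩ : ∃ n, N = n + 1 := ⟨N - 1, (Nat.succ_pred_eq_of_pos hN).symm⟩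
  set L := EuclideanSpace.equiv (Fin (n+1)) ℝ with hL
  set me := (MeasurableEquiv.toLp 2 (Fin (n+1) → ℝ)).symm with hme
  set h : (Fin (n+1) → ℝ) → ℝ := fun x => g (L.symm x) with hh
  have hd : Differentiable ℝ h := hg.comp L.symm.differentiable
  have hfd : ∀ x v, fderiv ℝ h x v = fderiv ℝ g (L.symm x) (L.symm v) := by
    intro x v
    have : fderiv ℝ h x = (fderiv ℝ g (L.symm x)).comp (L.symm : (Fin (n+1) → ℝ) →L[ℝ] _) := by
      rw [hh]
      have := fderiv_comp (𝕜 := ℝ) x (hg (L.symm x)) L.symm.differentiableAt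
      rw [show (fun x => g (L.symm x)) = g ∘ ⇑L.symm from rfl, this, L.symm.fderiv]
    rw [this]; rfl
  have hsingle : (L.symm (Pi.single i 1) : EuclideanSpace ℝ (Fin (n+1)))
      = EuclideanSpace.single i 1 := rfl
  have hperi : ∀ x, h (x + Pi.single i 1) = h x := by
    intro x
    have hz : (fun j => (((if j = i then 1 else 0 : ℤ)) : ℝ)) = Pi.single i (1:ℝ) := by
      funext j; by_cases hj : j = i <;> simp [hj, Pi.single_apply]
    have := hper (L.symm x) (fun j => if j = i then 1 else 0)
    rw [hz] at this
    rw [hh]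
    simpa [map_add, hsingle] using this
  have hpre : ⇑me.symm ⁻¹' unitCell (n+1) = Set.univ.pi (fun _ => Set.Ico (0:ℝ) 1) := by
    rw [cell_eq_preimage, ← Set.preimage_comp]
    simp [Function.comp_def]
    rfl
  have hfun : ∀ x, fderiv ℝ g (me.symm x) (EuclideanSpace.single i 1)
      = fderiv ℝ h x (Pi.single i 1) := by
    intro x; rw [hfd, hsingle, coe_symm_eq]
  have hintp : IntegrableOn (fun x => fderiv ℝ h x (Pi.single i 1)) (Set.Icc 0 1) volume := by
    have h1 : IntegrableOn ((fun y => fderiv ℝ g y (EuclideanSpace.single i 1)) ∘ ⇑me.symm)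
        (⇑me.symm ⁻¹' unitCell (n+1)) volume :=
      ((MeasurePreserving.symm me
        (EuclideanSpace.volume_preserving_symm_measurableEquiv_toLp (Fin (n+1)))).integrableOn_comp_preimage
        me.symm.measurableEmbedding).mpr hint
    rw [hpre] at h1
    have h2 : IntegrableOn ((fun y => fderiv ℝ g y (EuclideanSpace.single i 1)) ∘ ⇑me.symm)
        (Set.Icc 0 1) volume := h1.congr_set_ae Measure.univ_pi_Ico_ae_eq_Icc.symm
    exact h2.congr_fun (fun x _ => hfun x) measurableSet_Icc
  have hkey := key_div h hd i hperi hintp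
  rw [integral_cell]
  calc ∫ x in Set.univ.pi (fun _ : Fin (n+1) => Set.Ico (0:ℝ) 1),
        fderiv ℝ g (me.symm x) (EuclideanSpace.single i 1)
      = ∫ x in Set.Icc (0 : Fin (n+1) → ℝ) 1,
          fderiv ℝ g (me.symm x) (EuclideanSpace.single i 1) :=
        setIntegral_congr_set Measure.univ_pi_Ico_ae_eq_Icc
    _ = ∫ x in Set.Icc (0 : Fin (n+1) → ℝ) 1, fderiv ℝ h x (Pi.single i 1) := by
        simp only [hfun]
    _ = 0 := hkey
/-- Ellipticity bounds on the homogenized matrix: if `A` is measurable with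
`(A(y)ξ, ξ) ≥ α|ξ|²` and `|A(y)ξ| ≤ β|ξ|` a.e. on the unit cell `Y`, and for
each `λ` the corrector `ω_λ` solves the periodic cell problem
`−div(A∇ω_λ) = 0` in `Y` (in the weak form against periodic test functions),
with `ω_λ − λ·y` `Y`-periodic and of zero mean over `Y`, then the homogenized
matrix `A⁰λ = mean_Y (A∇ω_λ)` satisfies `(A⁰λ, λ) ≥ α|λ|²` and
`|A⁰λ| ≤ (β²/α)|λ|`. -/
theorem stmt6 {N : ℕ} (hN : 0 < N)
    (A : EuclideanSpace ℝ (Fin N) →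
      EuclideanSpace ℝ (Fin N) →L[ℝ] EuclideanSpace ℝ (Fin N))
    (α β : ℝ) (hα : 0 < α) (hβ : α < β)
    (hell : ∀ᵐ y ∂(volume.restrict (unitCell N)),
      ∀ ξ : EuclideanSpace ℝ (Fin N), α * ‖ξ‖ ^ 2 ≤ ⟪A y ξ, ξ⟫)
    (hbd : ∀ᵐ y ∂(volume.restrict (unitCell N)),
      ∀ ξ : EuclideanSpace ℝ (Fin N), ‖A y ξ‖ ≤ β * ‖ξ‖)
    (ω : EuclideanSpace ℝ (Fin N) → EuclideanSpace ℝ (Fin N) → ℝ)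
    (hdiff : ∀ lam, Differentiable ℝ (ω lam))
    (hper : ∀ lam, IsYPeriodic (fun y => ω lam y - ⟪lam, y⟫))
    (hmean : ∀ lam, ∫ y in unitCell N, (ω lam y - ⟪lam, y⟫) = 0)
    (hgradint : ∀ lam,
      IntegrableOn (fun y => ‖gradient (ω lam) y‖ ^ 2) (unitCell N) volume)
    (hAgradint : ∀ lam,
      IntegrableOn (fun y => A y (gradient (ω lam) y)) (unitCell N) volume)
    (hweak : ∀ lam, ∀ φ : EuclideanSpace ℝ (Fin N) → ℝ,
      Differentiable ℝ φ → IsYPeriodic φ →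
      ∫ y in unitCell N, ⟪A y (gradient (ω lam) y), gradient φ y⟫ = 0) :
    ∀ lam : EuclideanSpace ℝ (Fin N),
      α * ‖lam‖ ^ 2 ≤ ⟪∫ y in unitCell N, A y (gradient (ω lam) y), lam⟫ ∧
      ‖∫ y in unitCell N, A y (gradient (ω lam) y)‖ ≤ β ^ 2 / α * ‖lam‖ := by
  intro lam
  have hβ0 : 0 < β := hα.trans hβ
  set μ : Measure (EuclideanSpace ℝ (Fin N)) := volume.restrict (unitCell N) with hμdef
  set G : EuclideanSpace ℝ (Fin N) → EuclideanSpace ℝ (Fin N) :=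
    fun y => gradient (ω lam) y with hGdef
  have hμuniv : μ Set.univ = 1 := by
    rw [hμdef, Measure.restrict_apply_univ, cell_vol]
  have : IsFiniteMeasure μ := ⟨by rw [hμuniv]; exact ENNReal.one_lt_top⟩
  have hconst : ∀ c : ℝ, (∫ _ : EuclideanSpace ℝ (Fin N), c ∂μ) = c := fun c => by
    rw [integral_const, measureReal_def, hμuniv]; simp
  have hGmeas : Measurable G := meas_gradient (ω lam)
  have hGaem : AEStronglyMeasurable G μ := hGmeas.aestronglyMeasurable
  have hGsq : Integrable (fun y => ‖G y‖ ^ 2) μ := hgradint lam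
  have hGnorm : Integrable (fun y => ‖G y‖) μ := by
    refine Integrable.mono' (((integrable_const (1:ℝ)).add hGsq).div_const 2)
      hGaem.norm (Filter.Eventually.of_forall fun y => ?_)
    simp only [Pi.add_apply]
    rw [Real.norm_eq_abs, abs_of_nonneg (norm_nonneg _)]
    nlinarith [sq_nonneg (‖G y‖ - 1), norm_nonneg (G y)]
  have hGint : Integrable G μ :=
    Integrable.mono' hGnorm hGaem (Filter.Eventually.of_forall fun y => le_rfl)
  have hAG : Integrable (fun y => A y (G y)) μ := hAgradint lam
  have hAGG : Integrable (fun y => ⟪A y (G y), G y⟫) μ := by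
    refine Integrable.mono' (hGsq.const_mul β) (hAG.aestronglyMeasurable.inner hGaem)
      (hbd.mono fun y hy => ?_)
    rw [Real.norm_eq_abs]
    calc |⟪A y (G y), G y⟫| ≤ ‖A y (G y)‖ * ‖G y‖ := abs_real_inner_le_norm _ _
      _ ≤ (β * ‖G y‖) * ‖G y‖ := mul_le_mul_of_nonneg_right (hy (G y)) (norm_nonneg _)
      _ = β * ‖G y‖ ^ 2 := by ring
  have hGlam : Integrable (fun y => ⟪G y, lam⟫) μ := by
    refine Integrable.mono' (hGnorm.mul_const ‖lam‖)
      (hGaem.inner aestronglyMeasurable_const) (Filter.Eventually.of_forall fun y => ?_)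
    rw [Real.norm_eq_abs]; exact abs_real_inner_le_norm _ _
  have hAGlam : Integrable (fun y => ⟪A y (G y), lam⟫) μ := hAG.inner_const lam
  set g : EuclideanSpace ℝ (Fin N) → ℝ := fun y => ω lam y - ⟪lam, y⟫ with hgdef
  have hinnerdiff : Differentiable ℝ (fun y : EuclideanSpace ℝ (Fin N) => ⟪lam, y⟫) :=
    (innerSL ℝ lam).differentiable
  have hgd : Differentiable ℝ g := (hdiff lam).sub hinnerdiff
  have hfg : ∀ y v, fderiv ℝ g y v = fderiv ℝ (ω lam) y v - ⟪lam, v⟫ := by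
    intro y v
    have h1 : fderiv ℝ g y = fderiv ℝ (ω lam) y -
        fderiv ℝ (fun y : EuclideanSpace ℝ (Fin N) => ⟪lam, y⟫) y := by
      rw [hgdef]
      exact fderiv_sub (hdiff lam y) (hinnerdiff y)
    have h2 : fderiv ℝ (fun y : EuclideanSpace ℝ (Fin N) => ⟪lam, y⟫) y = innerSL ℝ lam :=
      (innerSL ℝ lam).fderiv
    rw [h1, h2, ContinuousLinearMap.sub_apply]; rfl
  have hgradg : ∀ y, gradient g y = G y - lam := by
    intro y
    refine ext_inner_right ℝ fun v => ?_
    rw [inner_gradient, hfg, inner_sub_left, inner_gradient]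
  have hgradg_int : Integrable (fun y => gradient g y) μ := by
    have : (fun y => gradient g y) = fun y => G y - lam := funext hgradg
    rw [this]
    exact hGint.sub (integrable_const lam)
  have hfdint : ∀ i : Fin N,
      Integrable (fun y => fderiv ℝ g y (EuclideanSpace.single i 1)) μ := by
    intro i
    refine Integrable.mono' (hGnorm.add (integrable_const ‖lam‖))
      (measurable_fderiv_apply_const (𝕜 := ℝ) (f := g)
        (EuclideanSpace.single i 1)).aestronglyMeasurable
      (Filter.Eventually.of_forall fun y => ?_)
    simp only [Pi.add_apply]
    rw [Real.norm_eq_abs]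
    calc |fderiv ℝ g y (EuclideanSpace.single i 1)|
        ≤ ‖fderiv ℝ g y‖ * ‖EuclideanSpace.single i (1:ℝ)‖ := by
          rw [← Real.norm_eq_abs]; exact (fderiv ℝ g y).le_opNorm _
      _ = ‖gradient g y‖ := by rw [← norm_gradient, EuclideanSpace.norm_single]; simp
      _ = ‖G y - lam‖ := by rw [hgradg]
      _ ≤ ‖G y‖ + ‖lam‖ := norm_sub_le _ _
  have hcomp : ∀ i : Fin N,
      (∫ y, fderiv ℝ g y (EuclideanSpace.single i 1) ∂μ) = 0 := fun i =>
    periodic_integral_zero hN g hgd (hper lam) i (hfdint i)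
  have hV : (∫ y, gradient g y ∂μ) = 0 := by
    have hcoord : ∀ i, ⟪(∫ y, gradient g y ∂μ), EuclideanSpace.single i (1:ℝ)⟫ = 0 := by
      intro i
      rw [real_inner_comm, ← integral_inner hgradg_int]
      rw [show (fun y => ⟪EuclideanSpace.single i (1:ℝ), gradient g y⟫)
          = fun y => fderiv ℝ g y (EuclideanSpace.single i 1) from
        funext fun y => by rw [real_inner_comm, inner_gradient]]
      exact hcomp i
    ext i
    simpa [EuclideanSpace.inner_single_right] using hcoord i
  have hVlam : (∫ y, ⟪gradient g y, lam⟫ ∂μ) = 0 := by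
    rw [show (fun y => ⟪gradient g y, lam⟫) = fun y => ⟪lam, gradient g y⟫ from
      funext fun y => real_inner_comm _ _]
    rw [integral_inner hgradg_int, hV, inner_zero_right]
  have hgradglam_int : Integrable (fun y => ⟪gradient g y, lam⟫) μ := by
    have : (fun y => ⟪gradient g y, lam⟫) = fun y => ⟪G y, lam⟫ - ⟪lam, lam⟫ := by
      funext y; rw [hgradg, inner_sub_left]
    rw [this]; exact hGlam.sub (integrable_const _)
  have hGlam_val : (∫ y, ⟪G y, lam⟫ ∂μ) = ‖lam‖ ^ 2 := by
    have hsplit : (fun y => ⟪G y, lam⟫)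
        = fun y => ⟪gradient g y, lam⟫ + ⟪lam, lam⟫ := by
      funext y; rw [hgradg, inner_sub_left]; ring
    rw [hsplit, integral_add hgradglam_int (integrable_const _), hVlam, hconst, zero_add,
      real_inner_self_eq_norm_sq]
  obtain ⟨S, hSdef⟩ : ∃ S, (∫ y, ‖G y‖ ^ 2 ∂μ) = S := ⟨_, rfl⟩
  have hS0 : 0 ≤ S := hSdef ▸ integral_nonneg fun y => sq_nonneg _
  have hSlam : ‖lam‖ ^ 2 ≤ S := by
    have hpt : (fun y => 2 * ⟪G y, lam⟫ - ‖lam‖ ^ 2) ≤ fun y => ‖G y‖ ^ 2 := by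
      intro y
      have h0 : (0:ℝ) ≤ ‖G y - lam‖ ^ 2 := sq_nonneg _
      rw [norm_sub_sq_real] at h0
      show 2 * ⟪G y, lam⟫ - ‖lam‖ ^ 2 ≤ ‖G y‖ ^ 2
      linarith
    have h := integral_mono ((hGlam.const_mul 2).sub (integrable_const (‖lam‖^2))) hGsq hpt
    simp only [Pi.sub_apply] at h
    rw [integral_sub (hGlam.const_mul 2) (integrable_const _), integral_const_mul, hGlam_val,
      hconst] at h
    rw [hSdef] at h
    linarith
  have hαS : α * S ≤ ∫ y, ⟪A y (G y), G y⟫ ∂μ := by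
    calc α * S = α * ∫ y, ‖G y‖ ^ 2 ∂μ := by rw [hSdef]
      _ = ∫ y, α * ‖G y‖ ^ 2 ∂μ := (integral_const_mul α _).symm
      _ ≤ ∫ y, ⟪A y (G y), G y⟫ ∂μ :=
        integral_mono_ae (hGsq.const_mul α) hAGG (hell.mono fun y hy => hy (G y))
  have hww := hweak lam g hgd (hper lam)
  rw [show (fun y => ⟪A y (G y), gradient g y⟫)
      = fun y => ⟪A y (G y), G y⟫ - ⟪A y (G y), lam⟫ from
    funext fun y => by rw [hgradg, inner_sub_right]] at hww
  rw [integral_sub hAGG hAGlam] at hww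
  have hAGG_eq : (∫ y, ⟪A y (G y), G y⟫ ∂μ) = ∫ y, ⟪A y (G y), lam⟫ ∂μ := sub_eq_zero.mp hww
  have hPlam : ⟪∫ y, A y (G y) ∂μ, lam⟫ = ∫ y, ⟪A y (G y), lam⟫ ∂μ := by
    rw [real_inner_comm, ← integral_inner hAG]
    exact integral_congr_ae (Filter.Eventually.of_forall fun y => real_inner_comm _ _)
  constructor
  · rw [hPlam, ← hAGG_eq]
    calc α * ‖lam‖ ^ 2 ≤ α * S := mul_le_mul_of_nonneg_left hSlam hα.le
      _ ≤ _ := hαS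
  · obtain ⟨I, hIdef⟩ : ∃ I, (∫ y, ‖G y‖ ∂μ) = I := ⟨_, rfl⟩
    have hI0 : 0 ≤ I := hIdef ▸ integral_nonneg fun y => norm_nonneg _
    obtain ⟨t, htdef⟩ : ∃ t, Real.sqrt S = t := ⟨_, rfl⟩
    have ht0 : 0 ≤ t := htdef ▸ Real.sqrt_nonneg _
    have hts : t ^ 2 = S := by rw [← htdef]; exact Real.sq_sqrt hS0
    have hIt : I ≤ t := by
      rcases hS0.eq_or_lt with hS | hS
      · have hz := (integral_eq_zero_iff_of_nonneg (fun y => sq_nonneg (‖G y‖)) hGsq).mp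
          (by rw [hSdef]; exact hS.symm)
        have hz2 : (fun y => ‖G y‖) =ᵐ[μ] (fun _ => (0:ℝ)) := hz.mono fun y hy => by
          have hy' : ‖G y‖ ^ 2 = 0 := hy
          simpa using (pow_eq_zero_iff (two_ne_zero : (2:ℕ) ≠ 0)).mp hy'
        have hIzero : I = 0 := by
          rw [← hIdef, integral_congr_ae hz2, integral_const]; simp
        rw [hIzero]; exact ht0
      · have htpos : 0 < t := htdef ▸ Real.sqrt_pos.mpr hS
        have hpt : (fun y => 2 * t * ‖G y‖) ≤ fun y => t ^ 2 + ‖G y‖ ^ 2 := by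
          intro y
          show 2 * t * ‖G y‖ ≤ t ^ 2 + ‖G y‖ ^ 2
          nlinarith [sq_nonneg (‖G y‖ - t)]
        have hInt := integral_mono (hGnorm.const_mul (2*t))
          ((integrable_const (t^2)).add hGsq) hpt
        simp only [Pi.add_apply] at hInt
        rw [integral_const_mul, integral_add (integrable_const _) hGsq, hconst, hSdef,
          hIdef] at hInt
        have ht2 : (2*t) * t = t ^ 2 + S := by rw [← hts]; ring
        have h2 : (2*t) * I ≤ (2*t) * t := by rw [ht2]; exact hInt
        exact le_of_mul_le_mul_left h2 (by positivity)
    have hM : ‖∫ y, A y (G y) ∂μ‖ ≤ β * I := by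
      calc ‖∫ y, A y (G y) ∂μ‖ ≤ ∫ y, ‖A y (G y)‖ ∂μ := norm_integral_le_integral_norm _
        _ ≤ ∫ y, β * ‖G y‖ ∂μ :=
          integral_mono_ae hAG.norm (hGnorm.const_mul β) (hbd.mono fun y hy => hy (G y))
        _ = β * I := by rw [integral_const_mul, hIdef]
    have hpM : α * S ≤ ‖∫ y, A y (G y) ∂μ‖ * ‖lam‖ := by
      calc α * S ≤ ∫ y, ⟪A y (G y), G y⟫ ∂μ := hαS
        _ = ⟪∫ y, A y (G y) ∂μ, lam⟫ := by rw [hPlam, hAGG_eq]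
        _ ≤ ‖∫ y, A y (G y) ∂μ‖ * ‖lam‖ := real_inner_le_norm _ _
    rw [div_mul_eq_mul_div, le_div_iff₀ hα]
    generalize hMg : ‖∫ y, A y (G y) ∂μ‖ = M at hM hpM ⊢
    have hM0 : 0 ≤ M := hMg ▸ norm_nonneg _
    rcases hM0.eq_or_lt with hM0' | hMpos
    · rw [← hM0', zero_mul]
      positivity
    · have hMt : M ≤ β * t := hM.trans (mul_le_mul_of_nonneg_left hIt hβ0.le)
      have hsq : M * M ≤ (β * t) * (β * t) := mul_le_mul hMt hMt hM0 (by positivity)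
      have h1 : M * (M * α) ≤ M * (β ^ 2 * ‖lam‖) := by
        calc M * (M * α) = α * (M * M) := by ring
          _ ≤ α * ((β * t) * (β * t)) := mul_le_mul_of_nonneg_left hsq hα.le
          _ = β ^ 2 * (α * S) := by rw [← hts]; ring
          _ ≤ β ^ 2 * (M * ‖lam‖) := mul_le_mul_of_nonneg_left hpM (sq_nonneg β)
          _ = M * (β ^ 2 * ‖lam‖) := by ring
      exact le_of_mul_le_mul_left h1 hMpos
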